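/- Let V be a finite set, let F : {0,1}^V → {0, 1, …, |V|} be a generalized counting function, let S ⊆ {0, 1, …, |V|} be 2-gap free, and assume the set M = {α ∈ {0,1}^V : F(α) ∈ S} is nonempty. Then M is a Δ-matroid. -/
import Mathlib


/-- Flip the values of a Boolean tuple on a finite set of coordinates. -/
def flipS {V : Type*} [DecidableEq V] (α : V → Bool) (S : Finset V) : V → Bool :=
  fun v => if v ∈ S then !(α v) else α v

/-- Flip the value of a Boolean tuple at a single coordinate. -/
def flip1 {V : Type*} [DecidableEq V] (α : V → Bool) (u : V) : V → Bool :=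
  flipS α {u}

/-- `M` is a Δ-matroid. -/
def IsDeltaMatroid {V : Type*} [DecidableEq V] (M : Set (V → Bool)) : Prop :=
  M.Nonempty ∧ ∀ α ∈ M, ∀ β ∈ M, ∀ v, α v ≠ β v →
    ∃ u, α u ≠ β u ∧ flipS α {u, v} ∈ M

/-- Number of ones in a Boolean tuple. -/
def numOnes {V : Type*} [Fintype V] (α : V → Bool) : ℕ :=
  (Finset.univ.filter fun v => α v = true).card

/-- `M` is an even Δ-matroid. -/
def IsEvenDeltaMatroid {V : Type*} [Fintype V] [DecidableEq V] (M : Set (V → Bool)) : Prop :=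
  IsDeltaMatroid M ∧ ∀ α ∈ M, ∀ β ∈ M, numOnes α % 2 = numOnes β % 2

/-- `α` and `β` are even-neighbors with respect to `M`. -/
def EvenNeighbors {V : Type*} [DecidableEq V] (M : Set (V → Bool)) (α β : V → Bool) : Prop :=
  ∃ u v, u ≠ v ∧ β = flip1 (flip1 α u) v ∧ flip1 α u ∉ M

/-- Reachability via chains of even-neighbors inside `M`. -/
def Reachable {V : Type*} [DecidableEq V] (M : Set (V → Bool)) :
    (V → Bool) → (V → Bool) → Prop :=
  Relation.ReflTransGen (fun x y => x ∈ M ∧ y ∈ M ∧ EvenNeighbors M x y)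

/-- `M` is coverable. -/
def Coverable {V : Type*} [Fintype V] [DecidableEq V] (M : Set (V → Bool)) : Prop :=
  ∀ α ∈ M, ∃ Mα : Set (V → Bool),
    IsEvenDeltaMatroid Mα ∧
    (∀ β ∈ M, Reachable M α β → β ∈ Mα) ∧
    (∀ γ ∈ M, Reachable M α γ → ∀ u v,
      flip1 (flip1 γ u) v ∈ Mα → flip1 (flip1 γ u) v ∉ M →
      flip1 γ u ∈ M ∧ flip1 γ v ∈ M)

/-- Direct product of two sets of tuples on disjoint ground sets. -/
def prodSet {U V : Type*} (M : Set (U → Bool)) (N : Set (V → Bool)) :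
    Set (U ⊕ V → Bool) :=
  {h | (fun u => h (Sum.inl u)) ∈ M ∧ (fun v => h (Sum.inr v)) ∈ N}

/-- `M` is an even-zebra Δ-matroid. -/
def IsEvenZebra {V : Type*} [Fintype V] [DecidableEq V] (M : Set (V → Bool)) : Prop :=
  ∀ α ∈ M, ∃ Mα : Set (V → Bool),
    IsEvenDeltaMatroid Mα ∧
    (∀ β ∈ M, numOnes β % 2 = numOnes α % 2 → β ∈ Mα) ∧
    (∀ β ∈ M, ∀ u v, flip1 (flip1 β u) v ∈ Mα → flip1 (flip1 β u) v ∉ M →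
      flip1 β u ∈ M ∧ flip1 β v ∈ M)

/-- Identification of two variables of `M`. -/
def identify {U : Type*} [DecidableEq U] (M : Set (U → Bool)) (w₁ w₂ : U) :
    Set ({x : U // x ≠ w₁ ∧ x ≠ w₂} → Bool) :=
  {g | ∃ β ∈ M, β w₁ = β w₂ ∧ ∀ x : {x : U // x ≠ w₁ ∧ x ≠ w₂}, g x = β x.val}


/-- `F` is a generalized counting function on `{0,1}^V`: it takes values in
`{0, …, |V|}`, changes by exactly `±1` under flipping a single coordinate, and whenever
`F α > F β` there are coordinates `u, v ∈ α △ β` with `F (α ⊕ u) = F α − 1` and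
`F (β ⊕ v) = F β + 1`. -/
def IsGCFunction {V : Type*} [Fintype V] [DecidableEq V] (F : (V → Bool) → ℕ) : Prop :=
  (∀ α, F α ≤ Fintype.card V) ∧
  (∀ α (v : V), F (flip1 α v) = F α + 1 ∨ F (flip1 α v) + 1 = F α) ∧
  (∀ α β, F β < F α → ∃ u v, α u ≠ β u ∧ α v ≠ β v ∧
    F (flip1 α u) + 1 = F α ∧ F (flip1 β v) = F β + 1)

/-- `S` is 2-gap free: any `x ∉ S` with `min S < x < max S` has both `x + 1 ∈ S` and
`x − 1 ∈ S`. -/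
def TwoGapFree (S : Finset ℕ) : Prop :=
  ∀ x, x ∉ S → (∃ a ∈ S, a < x) → (∃ b ∈ S, x < b) → (x + 1 ∈ S ∧ x - 1 ∈ S)


lemma flip1_apply {V : Type*} [DecidableEq V] (α : V → Bool) (v w : V) :
    flip1 α v w = if w = v then !(α w) else α w := by
  simp [flip1, flipS]

lemma flipS_pair {V : Type*} [DecidableEq V] (α : V → Bool) {u v : V} (h : u ≠ v) :
    flipS α {u, v} = flip1 (flip1 α v) u := by
  funext w
  simp only [flipS, flip1, Finset.mem_insert, Finset.mem_singleton]
  by_cases h1 : w = u <;> by_cases h2 : w = v <;> simp_all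

lemma flipS_self {V : Type*} [DecidableEq V] (α : V → Bool) (v : V) :
    flipS α {v, v} = flip1 α v := by
  rw [show ({v, v} : Finset V) = {v} from by simp]; rfl

/-- If `F` is a generalized counting function, `S ⊆ {0,…,|V|}` is 2-gap free, and
`M = {α : F α ∈ S}` is nonempty, then `M` is a Δ-matroid. -/
theorem gcFunction_twoGapFree_deltaMatroid {V : Type} [Fintype V] [DecidableEq V]
    (F : (V → Bool) → ℕ) (S : Finset ℕ)
    (hF : IsGCFunction F) (hSsub : ∀ s ∈ S, s ≤ Fintype.card V) (hgap : TwoGapFree S)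
    (hne : {α : V → Bool | F α ∈ S}.Nonempty) :
    IsDeltaMatroid {α : V → Bool | F α ∈ S} := by
  refine ⟨hne, ?_⟩
  intro α hα β hβ v hv
  simp only [Set.mem_setOf_eq] at hα hβ ⊢
  set α' := flip1 α v with hα'def
  by_cases hmem : F α' ∈ S
  · exact ⟨v, hv, by rw [flipS_self]; exact hmem⟩
  -- α' v = β v
  have hav : α' v = β v := by
    rw [hα'def, flip1_apply]
    simp only [if_pos rfl]
    cases h1 : α v <;> cases h2 : β v <;> simp_all
  have hne_v : ∀ w : V, α' w ≠ β w → w ≠ v := by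
    intro w hw hwv; rw [hwv] at hw; exact hw hav
  have happ : ∀ w : V, w ≠ v → α' w = α w := by
    intro w hwv; rw [hα'def, flip1_apply, if_neg hwv]
  have hβne : F β ≠ F α' := fun h => hmem (h ▸ hβ)
  have hstep := hF.2.1 α v
  by_cases hb : ∃ b ∈ S, F α' < b
  · by_cases ha : ∃ a ∈ S, a < F α'
    · obtain ⟨hx1, hx2⟩ := hgap (F α') hmem ha hb
      have hαβ : α' ≠ β := fun h => hmem (h ▸ hβ)
      obtain ⟨u, hu⟩ := Function.ne_iff.mp hαβ
      have huv : u ≠ v := hne_v u hu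
      refine ⟨u, ?_, ?_⟩
      · rw [← happ u huv]; exact hu
      · rw [flipS_pair α huv, ← hα'def]
        rcases hF.2.1 α' u with h | h
        · rw [h]; exact hx1
        · have : F (flip1 α' u) = F α' - 1 := by omega
          rw [this]; exact hx2
    · -- all of S ≥ F α' + 1 ; so F α = F α' + 1 and F β > F α'
      push_neg at ha
      have hβgt : F α' < F β := lt_of_le_of_ne (ha _ hβ) (Ne.symm hβne)
      have hαval : F α = F α' + 1 := by
        have := ha _ hα
        rcases hstep with h | h
        · rw [← hα'def] at h; omega
        · rw [← hα'def] at h; omega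
      obtain ⟨u0, v0, h1, h2, h3, h4⟩ := hF.2.2 β α' hβgt
      have hv0v : v0 ≠ v := hne_v v0 (Ne.symm h2)
      refine ⟨v0, ?_, ?_⟩
      · rw [← happ v0 hv0v]; exact Ne.symm h2
      · rw [flipS_pair α hv0v, ← hα'def, h4, ← hαval]; exact hα
  · -- all of S ≤ F α' - 1 ; so F α = F α' - 1 and F β < F α'
    push_neg at hb
    have hβlt : F β < F α' := lt_of_le_of_ne (hb _ hβ) hβne
    have hαval : F α + 1 = F α' := by
      have := hb _ hα
      rcases hstep with h | h
      · rw [← hα'def] at h; omega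
      · rw [← hα'def] at h; omega
    obtain ⟨u0, v0, h1, h2, h3, h4⟩ := hF.2.2 α' β hβlt
    have hu0v : u0 ≠ v := hne_v u0 h1
    refine ⟨u0, ?_, ?_⟩
    · rw [← happ u0 hu0v]; exact h1
    · rw [flipS_pair α hu0v, ← hα'def]
      have : F (flip1 α' u0) = F α := by omega
      rw [this]; exact hα
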